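/- Let E be a real inner product space, f : E → ℝ continuously differentiable with ‖∇f(x)‖ ≤ 1 for all x ∈ E, let b > 0, and let γ : [0,b] → E be a C¹ curve with γ(0) = γ(b). Then ∫₀^b ( (1/2)‖γ'(u) − 2u·∇f(γ(u))‖² + 2u²(1 − ‖∇f(γ(u))‖²) ) du = (2/3)b³ + ∫₀^b ( (1/2)‖γ'(u)‖² + 2( f(γ(u)) − f(γ(0)) ) ) du. (This expansion identity, obtained by the chain rule and integration by parts using that γ is a loop, is the key algebraic step in the proof of Lemma 2.1.) -/

import Mathlib

open Set MeasureTheory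

/-- The expansion identity for the reparametrized L-length of a C¹ loop
`γ : [0,b] → E` (the key algebraic step in the proof of Lemma 2.1): using the chain rule
and integration by parts on the loop,
`∫₀ᵇ ( ½‖γ' − 2u∇f(γ)‖² + 2u²(1 − ‖∇f(γ)‖²) ) = (2/3)b³ + ∫₀ᵇ ( ½‖γ'‖² + 2(f(γ) − f(γ(0))) )`. -/
theorem loop_L_length_expansion
    {E : Type*} [NormedAddCommGroup E] [InnerProductSpace ℝ E] [CompleteSpace E]
    (f : E → ℝ) (hf : ContDiff ℝ 1 f) (hgrad : ∀ x, ‖gradient f x‖ ≤ 1)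
    (b : ℝ) (hb : 0 < b) (γ γ' : ℝ → E)
    (hγ : ∀ u ∈ Icc (0:ℝ) b, HasDerivWithinAt γ (γ' u) (Icc (0:ℝ) b) u)
    (hγ' : ContinuousOn γ' (Icc (0:ℝ) b))
    (hloop : γ 0 = γ b) :
    (∫ u in (0:ℝ)..b,
      ((1/2) * ‖γ' u - (2 * u) • gradient f (γ u)‖ ^ 2
        + 2 * u ^ 2 * (1 - ‖gradient f (γ u)‖ ^ 2)))
      = (2/3) * b ^ 3
        + ∫ u in (0:ℝ)..b, ((1/2) * ‖γ' u‖ ^ 2 + 2 * (f (γ u) - f (γ 0))) := by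
  have hIcc : uIcc (0:ℝ) b = Icc 0 b := uIcc_of_le hb.le
  have hγc : ContinuousOn γ (Icc 0 b) := fun u hu => (hγ u hu).continuousWithinAt
  have hgradc : Continuous (gradient f) := by
    have h1 : Continuous (fderiv ℝ f) := hf.continuous_fderiv one_ne_zero
    exact (InnerProductSpace.toDual ℝ E).symm.continuous.comp h1
  -- derivative of the composition f ∘ γ at interior points
  have hcomp : ∀ u ∈ Ioo (0:ℝ) b,
      HasDerivAt (fun v => f (γ v)) (inner ℝ (gradient f (γ u)) (γ' u) : ℝ) u := by
    intro u hu
    have hmem : Icc (0:ℝ) b ∈ nhds u := Icc_mem_nhds hu.1 hu.2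
    have hγd : HasDerivAt γ (γ' u) u := (hγ u (Ioo_subset_Icc_self hu)).hasDerivAt hmem
    have hfd : HasFDerivAt f (fderiv ℝ f (γ u)) (γ u) :=
      (hf.differentiable one_ne_zero (γ u)).hasFDerivAt
    have := hfd.comp_hasDerivAt u hγd
    refine this.congr_deriv ?_
    unfold gradient
    exact InnerProductSpace.toDual_symm_apply.symm
  -- the function F u = 2 u f(γ u) and its derivative
  set D : ℝ → ℝ := fun u => 2 * f (γ u) + 2 * u * (inner ℝ (gradient f (γ u)) (γ' u) : ℝ)
    with hD
  have hDc : ContinuousOn D (Icc 0 b) := by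
    apply ContinuousOn.add
    · exact continuousOn_const.mul (hf.continuous.comp_continuousOn hγc)
    · exact ((continuousOn_const.mul continuousOn_id).mul
        ((hgradc.comp_continuousOn hγc).inner hγ'))
  have hFTC : ∫ u in (0:ℝ)..b, D u = 2 * b * f (γ b) - 2 * 0 * f (γ 0) := by
    apply intervalIntegral.integral_eq_sub_of_hasDeriv_right_of_le hb.le
    · exact (continuousOn_const.mul continuousOn_id).mul (hf.continuous.comp_continuousOn hγc)
    · intro u hu
      have h1 : HasDerivAt (fun v : ℝ => 2 * v) 2 u := by
        simpa using (hasDerivAt_id u).const_mul (2:ℝ)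
      have h2 := h1.mul (hcomp u hu)
      have : HasDerivAt (fun v => 2 * v * f (γ v)) (D u) u := by
        exact h2
      exact this.hasDerivWithinAt
    · exact (hDc.mono (by rw [← hIcc])).intervalIntegrable
  -- integrability facts
  have hIγ' : IntervalIntegrable (fun u => (1/2) * ‖γ' u‖ ^ 2 + 2 * (f (γ u) - f (γ 0)))
      volume 0 b := by
    apply ContinuousOn.intervalIntegrable
    rw [hIcc]
    exact (continuousOn_const.mul (hγ'.norm.pow 2)).add
      (continuousOn_const.mul ((hf.continuous.comp_continuousOn hγc).sub continuousOn_const))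
  have hIG : IntervalIntegrable (fun u => 2 * u ^ 2 - (D u - 2 * f (γ 0))) volume 0 b := by
    apply ContinuousOn.intervalIntegrable
    rw [hIcc]
    exact (continuousOn_const.mul (continuousOn_id.pow 2)).sub (hDc.sub continuousOn_const)
  -- pointwise identity
  have hpt : ∀ u : ℝ,
      (1/2) * ‖γ' u - (2 * u) • gradient f (γ u)‖ ^ 2
        + 2 * u ^ 2 * (1 - ‖gradient f (γ u)‖ ^ 2)
      = ((1/2) * ‖γ' u‖ ^ 2 + 2 * (f (γ u) - f (γ 0)))
        + (2 * u ^ 2 - (D u - 2 * f (γ 0))) := by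
    intro u
    have hexp : ‖γ' u - (2 * u) • gradient f (γ u)‖ ^ 2
        = ‖γ' u‖ ^ 2 - 2 * ((2 * u) * (inner ℝ (γ' u) (gradient f (γ u)) : ℝ))
          + (2 * u) ^ 2 * ‖gradient f (γ u)‖ ^ 2 := by
      rw [norm_sub_sq_real, real_inner_smul_right, norm_smul]
      simp [mul_pow]
    rw [hexp, hD, real_inner_comm (gradient f (γ u)) (γ' u)]
    ring
  have heq : (∫ u in (0:ℝ)..b,
      ((1/2) * ‖γ' u - (2 * u) • gradient f (γ u)‖ ^ 2
        + 2 * u ^ 2 * (1 - ‖gradient f (γ u)‖ ^ 2)))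
      = (∫ u in (0:ℝ)..b, ((1/2) * ‖γ' u‖ ^ 2 + 2 * (f (γ u) - f (γ 0))))
        + ∫ u in (0:ℝ)..b, (2 * u ^ 2 - (D u - 2 * f (γ 0))) := by
    rw [← intervalIntegral.integral_add hIγ' hIG]
    exact intervalIntegral.integral_congr fun u _ => hpt u
  have hG : (∫ u in (0:ℝ)..b, (2 * u ^ 2 - (D u - 2 * f (γ 0)))) = (2/3) * b ^ 3 := by
    have hIDc : IntervalIntegrable D volume 0 b :=
      (hDc.mono (by rw [← hIcc])).intervalIntegrable
    have h1 : IntervalIntegrable (fun u : ℝ => 2 * u ^ 2) volume 0 b :=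
      (Continuous.intervalIntegrable (by continuity) 0 b)
    have h2 : IntervalIntegrable (fun u : ℝ => D u - 2 * f (γ 0)) volume 0 b :=
      hIDc.sub intervalIntegrable_const
    rw [intervalIntegral.integral_sub h1 h2,
        intervalIntegral.integral_sub hIDc intervalIntegrable_const, hFTC,
        intervalIntegral.integral_const_mul, integral_pow, intervalIntegral.integral_const,
        hloop]
    rw [smul_eq_mul]; ring
  rw [heq, hG]; ring
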